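/- When u ≤ min{a+c, a+2b−c}, s ≤ min{b+c, 2a+b−c}, and u+s ≤ min{a+b, n}, the intersection number J_S(u,s,u+s;a,b,c) equals [((a−b+u+s)/2) choose ((c−b+s)/2)]_q · [((b−a+u+s)/2) choose ((c−a+u)/2)]_q; if any of the three conditions fails, J_S(u,s,u+s;a,b,c) = 0. -/

import Mathlib

/-- `galpha q m u = ∏_{i=0}^{u-1} (q^m - q^i)`. -/
def galpha (q m u : ℕ) : ℕ := ∏ i ∈ Finset.range u, (q ^ m - q ^ i)

/-- The Gaussian binomial coefficient `[n choose r]_q = α(n,r)/α(r,r)`. -/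
def gauss (q n r : ℕ) : ℕ := galpha q n r / galpha q r r

/-- Gaussian binomial with rational arguments, interpreted as `0` unless the
arguments are nonnegative integers `x ≥ y`. -/
def gaussQ (q : ℕ) (x y : ℚ) : ℕ :=
  if 0 ≤ x ∧ 0 ≤ y ∧ y ≤ x ∧ x.den = 1 ∧ y.den = 1 then gauss q x.num.toNat y.num.toNat else 0

/-- The subspace distance `d_S(U,V) = dim(U+V) - dim(U∩V)`. -/
noncomputable def dS {F : Type} [Field F] {n : ℕ} (U V : Submodule F (Fin n → F)) : ℕ :=
  Module.finrank F ↥(U ⊔ V) - Module.finrank F ↥(U ⊓ V)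

set_option maxHeartbeats 1000000

open Module Submodule

lemma gauss_zero {q : ℕ} (m r : ℕ) (h : m < r) : gauss q m r = 0 := by
  have hz : galpha q m r = 0 :=
    Finset.prod_eq_zero (Finset.mem_range.2 h) (by simp)
  rw [gauss, hz, Nat.zero_div]

lemma gaussQ_natCast (q m r : ℕ) : gaussQ q (m:ℚ) (r:ℚ) = gauss q m r := by
  rcases le_or_gt r m with h | h
  · rw [gaussQ, if_pos]
    · simp
    · refine ⟨by positivity, by positivity, by exact_mod_cast h, by simp, by simp⟩
  · rw [gaussQ, if_neg, gauss_zero m r h]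
    rintro ⟨-, -, hle, -, -⟩
    exact absurd (by exact_mod_cast hle) (by omega)

lemma den_half {m : ℤ} (hm : (((m:ℚ))/2).den = 1) : 2 ∣ m := by
  have h : ((((m:ℚ)/2).num : ℚ)) = (m:ℚ)/2 := (Rat.den_eq_one_iff _).mp hm
  refine ⟨((m:ℚ)/2).num, ?_⟩
  have : (m : ℚ) = 2 * (((m:ℚ)/2).num : ℚ) := by rw [h]; ring
  exact_mod_cast this

section Count
variable {F V : Type*} [Field F] [Fintype F] [AddCommGroup V] [Module F V] [Finite V]

/-- The fiber of the span map over a subspace `W` of dimension `r`. -/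
noncomputable def fiberEquiv (W : Submodule F V) (r : ℕ) (hW : finrank F W = r) :
    {p : {s : Fin r → V // LinearIndependent F s} // Submodule.span F (Set.range p.1) = W}
      ≃ {t : Fin r → W // LinearIndependent F t} where
  toFun p := ⟨fun i => ⟨p.1.1 i, by
      have h : p.1.1 i ∈ Submodule.span F (Set.range p.1.1) := Submodule.subset_span ⟨i, rfl⟩
      rwa [p.2] at h⟩, by
    refine (W.subtype.linearIndependent_iff (Submodule.ker_subtype W)).mp ?_
    exact p.1.2⟩
  invFun t := ⟨⟨fun i => (t.1 i : V), by
      exact (W.subtype.linearIndependent_iff (Submodule.ker_subtype W)).mpr t.2⟩, by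
    have : FiniteDimensional F W := by infer_instance
    have h1 : Submodule.span F (Set.range t.1) = ⊤ :=
      t.2.span_eq_top_of_card_eq_finrank' (by simp [hW])
    have h2 : Set.range (fun i => (t.1 i : V)) = W.subtype '' (Set.range t.1) := by
      ext v; simp
    rw [h2, ← Submodule.map_span, h1, Submodule.map_top, Submodule.range_subtype]⟩
  left_inv p := by ext i; rfl
  right_inv t := by ext i; rfl

/-- The number of `r`-dimensional subspaces of a finite vector space is the Gaussian
binomial coefficient. -/
lemma card_subspaces (r : ℕ) :
    Nat.card {W : Submodule F V // finrank F W = r} = gauss (Fintype.card F) (finrank F V) r := by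
  classical
  set q := Fintype.card F with hqdef
  set n := finrank F V with hndef
  have hq : 2 ≤ q := Fintype.one_lt_card
  have hgpos : 0 < galpha q r r := by
    apply Finset.prod_pos; intro i hi
    simp only [Finset.mem_range] at hi
    have : q ^ i < q ^ r := Nat.pow_lt_pow_right hq hi
    omega
  rcases le_or_gt r n with hr | hr
  · letI : Fintype (Submodule F V) := Fintype.ofFinite _
    set T := {s : Fin r → V // LinearIndependent F s} with hT
    set f : T → Submodule F V := fun s => Submodule.span F (Set.range s.1) with hf
    have h1 : Nat.card T = galpha q n r := by
      rw [card_linearIndependent hr, galpha, ← Fin.prod_univ_eq_prod_range]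
    have hfib : ∀ W : Submodule F V, Nat.card {p : T // f p = W}
        = if finrank F W = r then galpha q r r else 0 := by
      intro W
      by_cases hW : finrank F W = r
      · rw [if_pos hW, Nat.card_congr (fiberEquiv W r hW),
          card_linearIndependent (le_of_eq hW.symm), hW, galpha, ← Fin.prod_univ_eq_prod_range]
      · rw [if_neg hW, Nat.card_eq_zero]
        left
        refine ⟨fun p => hW ?_⟩
        have h2 : finrank F (f p.1) = r := by
          show finrank F (Submodule.span F (Set.range p.1.1)) = r
          simp only [finrank_span_eq_card p.1.2, Fintype.card_fin]
        rw [← p.2, h2]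
    have hcards : Nat.card T = ∑ W : Submodule F V, Nat.card {p : T // f p = W} := by
      rw [Nat.card_congr (Equiv.sigmaFiberEquiv f).symm]
      haveI : ∀ W : Submodule F V, Fintype {p : T // f p = W} := fun _ => Fintype.ofFinite _
      haveI : Fintype T := Fintype.ofFinite _
      simp [Nat.card_eq_fintype_card, Fintype.card_sigma]
    have key : galpha q n r = Nat.card {W : Submodule F V // finrank F W = r} * galpha q r r := by
      rw [← h1, hcards]
      have : ∑ W : Submodule F V, Nat.card {p : T // f p = W}
          = ∑ W : Submodule F V, if finrank F W = r then galpha q r r else 0 :=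
        Finset.sum_congr rfl fun W _ => hfib W
      rw [this, ← Finset.sum_filter, Finset.sum_const, smul_eq_mul,
        Nat.card_eq_fintype_card, Fintype.card_subtype]
    rw [gauss, key, Nat.mul_div_cancel _ hgpos]
  · have hz : galpha q n r = 0 :=
      Finset.prod_eq_zero (Finset.mem_range.2 hr) (by simp)
    rw [gauss, hz, Nat.zero_div, Nat.card_eq_zero]
    left
    refine ⟨fun W => ?_⟩
    have := Submodule.finrank_le W.1
    omega

end Count

section Interval
variable {F V : Type*} [Field F] [AddCommGroup V] [Module F V] [FiniteDimensional F V]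

lemma finrank_map_mkQ_add (J Y : Submodule F V) (h : J ≤ Y) :
    finrank F (Y.map J.mkQ) + finrank F J = finrank F Y := by
  set f : Y →ₗ[F] V ⧸ J := J.mkQ.comp Y.subtype with hf
  have hrange : LinearMap.range f = Y.map J.mkQ := by
    rw [hf, LinearMap.range_comp, Submodule.range_subtype]
  have hker : LinearMap.ker f = J.comap Y.subtype := by
    rw [hf, LinearMap.ker_comp, Submodule.ker_mkQ]
  have h2 := LinearMap.finrank_range_add_finrank_ker f
  rw [hrange, hker] at h2
  rw [← h2, (Submodule.comapSubtypeEquivOfLe h).finrank_eq]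

/-- Subspaces in the interval `[I, A]` of dimension `x` correspond to subspaces of `A/I`
of dimension `x - dim I`. -/
noncomputable def intervalEquiv (I A : Submodule F V) (hIA : I ≤ A) (x : ℕ)
    (hd : finrank F I ≤ x) :
    {X : Submodule F V // I ≤ X ∧ X ≤ A ∧ finrank F X = x}
      ≃ {Z : Submodule F (↥A ⧸ (I.comap A.subtype)) // finrank F Z = x - finrank F I} := by
  set J := I.comap A.subtype with hJ
  set d := finrank F I with hdd
  have frJ : finrank F J = d := (Submodule.comapSubtypeEquivOfLe hIA).finrank_eq
  refine
  { toFun := fun X => ⟨(X.1.comap A.subtype).map J.mkQ, ?_⟩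
    invFun := fun Z => ⟨((Z.1.comap J.mkQ).map A.subtype), ?_, ?_, ?_⟩
    left_inv := ?_
    right_inv := ?_ }
  · obtain ⟨hX1, hX2, hX3⟩ := X.2
    have hJY : J ≤ X.1.comap A.subtype := Submodule.comap_mono hX1
    have hY : finrank F (X.1.comap A.subtype) = x := by
      rw [(Submodule.comapSubtypeEquivOfLe hX2).finrank_eq, hX3]
    have := finrank_map_mkQ_add J (X.1.comap A.subtype) hJY
    rw [hY, frJ] at this
    omega
  · have h1 : I = J.map A.subtype := by
      rw [hJ, Submodule.map_comap_subtype, inf_eq_right.2 hIA]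
    rw [h1]
    exact Submodule.map_mono ((Submodule.ker_mkQ J).symm.le.trans
      (LinearMap.ker_le_comap (p := Z.1) J.mkQ))
  · exact Submodule.map_subtype_le A _
  · have hJY : J ≤ Z.1.comap J.mkQ := fun v hv => by
      have h0 : J.mkQ v = 0 := by rwa [← LinearMap.mem_ker, Submodule.ker_mkQ]
      simp [Submodule.mem_comap, h0]
    have h1 : (Z.1.comap J.mkQ).map J.mkQ = Z.1 := by
      rw [Submodule.map_comap_eq, Submodule.range_mkQ, top_inf_eq]
    have h2 := finrank_map_mkQ_add J (Z.1.comap J.mkQ) hJY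
    rw [h1, Z.2, frJ] at h2
    have h3 : finrank F ((Z.1.comap J.mkQ).map A.subtype) = finrank F (Z.1.comap J.mkQ) :=
      ((Submodule.equivMapOfInjective A.subtype (Submodule.injective_subtype A)
        (Z.1.comap J.mkQ)).finrank_eq).symm
    omega
  · rintro ⟨X, hX1, hX2, hX3⟩
    apply Subtype.ext
    simp only
    have hJY : J ≤ X.comap A.subtype := Submodule.comap_mono hX1
    rw [Submodule.comap_map_eq, Submodule.ker_mkQ, sup_eq_left.2 hJY,
      Submodule.map_comap_subtype, inf_eq_right.2 hX2]
  · rintro ⟨Z, hZ⟩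
    apply Subtype.ext
    simp only
    rw [Submodule.comap_map_eq, Submodule.ker_subtype, sup_bot_eq,
      Submodule.map_comap_eq, Submodule.range_mkQ, top_inf_eq]

end Interval

section Interval2
variable {F V : Type*} [Field F] [Fintype F] [AddCommGroup V] [Module F V] [Finite V]

lemma card_interval (I A : Submodule F V) (hIA : I ≤ A) (x : ℕ) (hd : finrank F I ≤ x) :
    Nat.card {X : Submodule F V // I ≤ X ∧ X ≤ A ∧ finrank F X = x}
      = gauss (Fintype.card F) (finrank F A - finrank F I) (x - finrank F I) := by
  haveI : FiniteDimensional F V := by infer_instance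
  haveI : Finite (↥A ⧸ I.comap A.subtype) :=
    Finite.of_surjective _ (Submodule.mkQ_surjective (I.comap A.subtype))
  rw [Nat.card_congr (intervalEquiv I A hIA x hd), card_subspaces]
  congr 1
  have h1 := Submodule.finrank_quotient_add_finrank (I.comap A.subtype)
  have frJ : finrank F (I.comap A.subtype) = finrank F I :=
    (Submodule.comapSubtypeEquivOfLe hIA).finrank_eq
  have h2 : finrank F I ≤ finrank F A := Submodule.finrank_mono hIA
  omega

/-- The key geodesic bijection: subspaces `C` with `dim C = c`, `d_S(A,C) = u`,
`d_S(B,C) = s` (in the triangle-equality situation) correspond to pairs of subspaces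
`(X, Y)` with `A ⊓ B ≤ X ≤ A`, `A ⊓ B ≤ Y ≤ B` of the appropriate dimensions. -/
noncomputable def coreEquiv (A B : Submodule F V) (a b c u s d x y : ℕ)
    (hA : finrank F A = a) (hB : finrank F B = b)
    (hd : finrank F (A ⊓ B : Submodule F V) = d)
    (hx : a + c = u + 2*x) (hy : b + c = s + 2*y) (hxy : x + y = c + d) :
    {C : Submodule F V // finrank F C = c ∧
        finrank F (A ⊔ C : Submodule F V) - finrank F (A ⊓ C : Submodule F V) = u ∧
        finrank F (B ⊔ C : Submodule F V) - finrank F (B ⊓ C : Submodule F V) = s}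
      ≃ {X : Submodule F V // A ⊓ B ≤ X ∧ X ≤ A ∧ finrank F X = x} ×
        {Y : Submodule F V // A ⊓ B ≤ Y ∧ Y ≤ B ∧ finrank F Y = y} := by
  have fact : ∀ C : Submodule F V, finrank F C = c →
      finrank F (A ⊔ C : Submodule F V) - finrank F (A ⊓ C : Submodule F V) = u →
      finrank F (B ⊔ C : Submodule F V) - finrank F (B ⊓ C : Submodule F V) = s →
      finrank F (A ⊓ C : Submodule F V) = x ∧ finrank F (B ⊓ C : Submodule F V) = y ∧
      (A ⊓ C) ⊔ (B ⊓ C) = C ∧ (A ⊓ C) ⊓ (B ⊓ C) = A ⊓ B := by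
    intro C hC hu hs
    have s1 : finrank F (A ⊔ C : Submodule F V) + finrank F (A ⊓ C : Submodule F V) = a + c := by
      rw [← hA, ← hC]; exact finrank_sup_add_finrank_inf_eq A C
    have m1 : finrank F (A ⊓ C : Submodule F V) ≤ finrank F (A ⊔ C : Submodule F V) :=
      Submodule.finrank_mono (inf_le_left.trans le_sup_left)
    have frAC : finrank F (A ⊓ C : Submodule F V) = x := by omega
    have s2 : finrank F (B ⊔ C : Submodule F V) + finrank F (B ⊓ C : Submodule F V) = b + c := by
      rw [← hB, ← hC]; exact finrank_sup_add_finrank_inf_eq B C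
    have m2 : finrank F (B ⊓ C : Submodule F V) ≤ finrank F (B ⊔ C : Submodule F V) :=
      Submodule.finrank_mono (inf_le_left.trans le_sup_left)
    have frBC : finrank F (B ⊓ C : Submodule F V) = y := by omega
    have s3 : finrank F ((A ⊓ C) ⊔ (B ⊓ C) : Submodule F V)
        + finrank F ((A ⊓ C) ⊓ (B ⊓ C) : Submodule F V) = x + y := by
      rw [← frAC, ← frBC]; exact finrank_sup_add_finrank_inf_eq _ _
    have hPle : (A ⊓ C) ⊔ (B ⊓ C) ≤ C := sup_le inf_le_right inf_le_right
    have hQle : (A ⊓ C) ⊓ (B ⊓ C) ≤ A ⊓ B :=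
      le_inf (inf_le_left.trans inf_le_left) (inf_le_right.trans inf_le_left)
    have mP : finrank F ((A ⊓ C) ⊔ (B ⊓ C) : Submodule F V) ≤ c :=
      hC ▸ Submodule.finrank_mono hPle
    have mQ : finrank F ((A ⊓ C) ⊓ (B ⊓ C) : Submodule F V) ≤ d :=
      hd ▸ Submodule.finrank_mono hQle
    have hPC : (A ⊓ C) ⊔ (B ⊓ C) = C :=
      Submodule.eq_of_le_of_finrank_le hPle (by omega)
    have hQI : (A ⊓ C) ⊓ (B ⊓ C) = A ⊓ B :=
      Submodule.eq_of_le_of_finrank_le hQle (by omega)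
    exact ⟨frAC, frBC, hPC, hQI⟩
  have bfact : ∀ (X Y : Submodule F V), A ⊓ B ≤ X → X ≤ A → finrank F X = x →
      A ⊓ B ≤ Y → Y ≤ B → finrank F Y = y →
      finrank F (X ⊔ Y : Submodule F V) = c ∧ A ⊓ (X ⊔ Y) = X ∧ B ⊓ (X ⊔ Y) = Y := by
    intro X Y hIX hXA hX3 hIY hYB hY3
    have hXY : X ⊓ Y = A ⊓ B :=
      le_antisymm (le_inf (inf_le_left.trans hXA) (inf_le_right.trans hYB)) (le_inf hIX hIY)
    have s3 : finrank F (X ⊔ Y : Submodule F V) + finrank F (X ⊓ Y : Submodule F V) = x + y := by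
      rw [← hX3, ← hY3]; exact finrank_sup_add_finrank_inf_eq X Y
    rw [hXY, hd] at s3
    have frC : finrank F (X ⊔ Y : Submodule F V) = c := by omega
    have infA : A ⊓ (X ⊔ Y) = X := by
      have hmod : (X ⊔ Y) ⊓ A = X ⊔ (Y ⊓ A) := sup_inf_assoc_of_le Y hXA
      have hle : Y ⊓ A ≤ X :=
        le_trans (le_inf inf_le_right (inf_le_left.trans hYB)) hIX
      rw [inf_comm, hmod, sup_eq_left.2 hle]
    have infB : B ⊓ (X ⊔ Y) = Y := by
      have hmod : (Y ⊔ X) ⊓ B = Y ⊔ (X ⊓ B) := sup_inf_assoc_of_le X hYB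
      have hle : X ⊓ B ≤ Y :=
        le_trans (le_inf (inf_le_left.trans hXA) inf_le_right) hIY
      rw [inf_comm, sup_comm, hmod, sup_eq_left.2 hle]
    exact ⟨frC, infA, infB⟩
  refine
  { toFun := fun C => (⟨A ⊓ C.1, ?_, inf_le_left, ?_⟩, ⟨B ⊓ C.1, ?_, inf_le_left, ?_⟩)
    invFun := fun P => ⟨P.1.1 ⊔ P.2.1, ?_, ?_, ?_⟩
    left_inv := ?_
    right_inv := ?_ }
  · obtain ⟨hC, hu, hs⟩ := C.2
    obtain ⟨-, -, -, hQI⟩ := fact C.1 hC hu hs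
    rw [← hQI]; exact inf_le_left
  · exact (fact C.1 C.2.1 C.2.2.1 C.2.2.2).1
  · obtain ⟨hC, hu, hs⟩ := C.2
    obtain ⟨-, -, -, hQI⟩ := fact C.1 hC hu hs
    rw [← hQI]; exact inf_le_right
  · exact (fact C.1 C.2.1 C.2.2.1 C.2.2.2).2.1
  · obtain ⟨h1, h2, h3⟩ := P.1.2
    obtain ⟨h4, h5, h6⟩ := P.2.2
    exact (bfact _ _ h1 h2 h3 h4 h5 h6).1
  · obtain ⟨h1, h2, h3⟩ := P.1.2
    obtain ⟨h4, h5, h6⟩ := P.2.2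
    obtain ⟨frC, infA, -⟩ := bfact _ _ h1 h2 h3 h4 h5 h6
    have s1 : finrank F (A ⊔ (P.1.1 ⊔ P.2.1) : Submodule F V)
        + finrank F (A ⊓ (P.1.1 ⊔ P.2.1) : Submodule F V) = a + c := by
      rw [← hA, ← frC]; exact finrank_sup_add_finrank_inf_eq _ _
    rw [infA, h3] at s1 ⊢
    omega
  · obtain ⟨h1, h2, h3⟩ := P.1.2
    obtain ⟨h4, h5, h6⟩ := P.2.2
    obtain ⟨frC, -, infB⟩ := bfact _ _ h1 h2 h3 h4 h5 h6
    have s1 : finrank F (B ⊔ (P.1.1 ⊔ P.2.1) : Submodule F V)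
        + finrank F (B ⊓ (P.1.1 ⊔ P.2.1) : Submodule F V) = b + c := by
      rw [← hB, ← frC]; exact finrank_sup_add_finrank_inf_eq _ _
    rw [infB, h6] at s1 ⊢
    omega
  · rintro ⟨C, hC, hu, hs⟩
    apply Subtype.ext
    exact (fact C hC hu hs).2.2.1
  · rintro ⟨⟨X, hX⟩, ⟨Y, hY⟩⟩
    obtain ⟨-, infA, infB⟩ := bfact X Y hX.1 hX.2.1 hX.2.2 hY.1 hY.2.1 hY.2.2
    refine Prod.ext (Subtype.ext ?_) (Subtype.ext ?_)
    · exact infA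
    · exact infB

lemma card_core (A B : Submodule F V) (a b c u s d x y : ℕ)
    (hA : finrank F A = a) (hB : finrank F B = b)
    (hd : finrank F (A ⊓ B : Submodule F V) = d)
    (hx : a + c = u + 2*x) (hy : b + c = s + 2*y) (hxy : x + y = c + d)
    (hxd : d ≤ x) (hyd : d ≤ y) :
    Nat.card {C : Submodule F V // finrank F C = c ∧
        finrank F (A ⊔ C : Submodule F V) - finrank F (A ⊓ C : Submodule F V) = u ∧
        finrank F (B ⊔ C : Submodule F V) - finrank F (B ⊓ C : Submodule F V) = s}
      = gauss (Fintype.card F) (a - d) (x - d) * gauss (Fintype.card F) (b - d) (y - d) := by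
  rw [Nat.card_congr (coreEquiv A B a b c u s d x y hA hB hd hx hy hxy), Nat.card_prod,
    card_interval (A ⊓ B) A inf_le_left x (by rw [hd]; exact hxd),
    card_interval (A ⊓ B) B inf_le_right y (by rw [hd]; exact hyd), hA, hB, hd]

end Interval2

theorem stmt16 (F : Type) [Field F] [Fintype F] (n a b c u s : ℕ)
    (A B : Submodule F (Fin n → F))
    (hA : Module.finrank F ↥A = a) (hB : Module.finrank F ↥B = b)
    (hAB : dS A B = u + s) :
    ((u : ℤ) ≤ min ((a : ℤ) + c) ((a : ℤ) + 2 * b - c) ∧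
     (s : ℤ) ≤ min ((b : ℤ) + c) (2 * (a : ℤ) + b - c) ∧
     (u : ℤ) + s ≤ min ((a : ℤ) + b) (n : ℤ) →
      Nat.card {C : Submodule F (Fin n → F) //
          Module.finrank F ↥C = c ∧ dS A C = u ∧ dS B C = s} =
        gaussQ (Fintype.card F) (((a : ℚ) - b + u + s) / 2) (((c : ℚ) - b + s) / 2) *
          gaussQ (Fintype.card F) (((b : ℚ) - a + u + s) / 2) (((c : ℚ) - a + u) / 2)) ∧
    (¬((u : ℤ) ≤ min ((a : ℤ) + c) ((a : ℤ) + 2 * b - c) ∧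
       (s : ℤ) ≤ min ((b : ℤ) + c) (2 * (a : ℤ) + b - c) ∧
       (u : ℤ) + s ≤ min ((a : ℤ) + b) (n : ℤ)) →
      Nat.card {C : Submodule F (Fin n → F) //
        Module.finrank F ↥C = c ∧ dS A C = u ∧ dS B C = s} = 0) := by
  classical
  simp only [dS] at hAB ⊢
  set q := Fintype.card F with hqdef
  set d := finrank F (A ⊓ B : Submodule F (Fin n → F)) with hd
  have s1 : finrank F (A ⊔ B : Submodule F (Fin n → F)) + d = a + b := by
    rw [hd, ← hA, ← hB]; exact finrank_sup_add_finrank_inf_eq A B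
  have m1 : d ≤ finrank F (A ⊔ B : Submodule F (Fin n → F)) :=
    Submodule.finrank_mono (inf_le_left.trans le_sup_left)
  have hd2 : a + b = u + s + 2*d := by omega
  have hsupn : finrank F (A ⊔ B : Submodule F (Fin n → F)) ≤ n := by
    have h := Submodule.finrank_le (A ⊔ B : Submodule F (Fin n → F))
    rwa [Module.finrank_fin_fun] at h
  have hda : d ≤ a := by rw [← hA]; exact Submodule.finrank_mono inf_le_left
  have hdb : d ≤ b := by rw [← hB]; exact Submodule.finrank_mono inf_le_right
  -- facts about an arbitrary C in the counted set
  have factC : ∀ C : Submodule F (Fin n → F), finrank F C = c →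
      finrank F (A ⊔ C : Submodule F (Fin n → F))
        - finrank F (A ⊓ C : Submodule F (Fin n → F)) = u →
      finrank F (B ⊔ C : Submodule F (Fin n → F))
        - finrank F (B ⊓ C : Submodule F (Fin n → F)) = s →
      a + c = u + 2 * finrank F (A ⊓ C : Submodule F (Fin n → F)) ∧
      b + c = s + 2 * finrank F (B ⊓ C : Submodule F (Fin n → F)) ∧
      d ≤ finrank F (A ⊓ C : Submodule F (Fin n → F)) ∧
      d ≤ finrank F (B ⊓ C : Submodule F (Fin n → F)) ∧
      finrank F (A ⊓ C : Submodule F (Fin n → F)) ≤ a ∧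
      finrank F (B ⊓ C : Submodule F (Fin n → F)) ≤ b := by
    intro C hC hu hs
    have sA : finrank F (A ⊔ C : Submodule F (Fin n → F))
        + finrank F (A ⊓ C : Submodule F (Fin n → F)) = a + c := by
      rw [← hA, ← hC]; exact finrank_sup_add_finrank_inf_eq A C
    have mA : finrank F (A ⊓ C : Submodule F (Fin n → F))
        ≤ finrank F (A ⊔ C : Submodule F (Fin n → F)) :=
      Submodule.finrank_mono (inf_le_left.trans le_sup_left)
    have sB : finrank F (B ⊔ C : Submodule F (Fin n → F))
        + finrank F (B ⊓ C : Submodule F (Fin n → F)) = b + c := by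
      rw [← hB, ← hC]; exact finrank_sup_add_finrank_inf_eq B C
    have mB : finrank F (B ⊓ C : Submodule F (Fin n → F))
        ≤ finrank F (B ⊔ C : Submodule F (Fin n → F)) :=
      Submodule.finrank_mono (inf_le_left.trans le_sup_left)
    have sP : finrank F ((A ⊓ C) ⊔ (B ⊓ C) : Submodule F (Fin n → F))
        + finrank F ((A ⊓ C) ⊓ (B ⊓ C) : Submodule F (Fin n → F))
        = finrank F (A ⊓ C : Submodule F (Fin n → F))
          + finrank F (B ⊓ C : Submodule F (Fin n → F)) :=
      finrank_sup_add_finrank_inf_eq _ _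
    have hPle : (A ⊓ C) ⊔ (B ⊓ C) ≤ C := sup_le inf_le_right inf_le_right
    have hQle : ((A ⊓ C) ⊓ (B ⊓ C) : Submodule F (Fin n → F)) ≤ A ⊓ B :=
      le_inf (inf_le_left.trans inf_le_left) (inf_le_right.trans inf_le_left)
    have mP : finrank F ((A ⊓ C) ⊔ (B ⊓ C) : Submodule F (Fin n → F)) ≤ c :=
      hC ▸ Submodule.finrank_mono hPle
    have mQ : finrank F ((A ⊓ C) ⊓ (B ⊓ C) : Submodule F (Fin n → F)) ≤ d :=
      Submodule.finrank_mono hQle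
    have hQd : finrank F ((A ⊓ C) ⊓ (B ⊓ C) : Submodule F (Fin n → F)) = d := by omega
    have hQ1 : finrank F ((A ⊓ C) ⊓ (B ⊓ C) : Submodule F (Fin n → F))
        ≤ finrank F (A ⊓ C : Submodule F (Fin n → F)) :=
      Submodule.finrank_mono inf_le_left
    have hQ2 : finrank F ((A ⊓ C) ⊓ (B ⊓ C) : Submodule F (Fin n → F))
        ≤ finrank F (B ⊓ C : Submodule F (Fin n → F)) :=
      Submodule.finrank_mono inf_le_right
    have mAa : finrank F (A ⊓ C : Submodule F (Fin n → F)) ≤ a := by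
      rw [← hA]; exact Submodule.finrank_mono inf_le_left
    have mBb : finrank F (B ⊓ C : Submodule F (Fin n → F)) ≤ b := by
      rw [← hB]; exact Submodule.finrank_mono inf_le_left
    omega
  constructor
  · -- conditions hold
    intro hcond
    rw [le_min_iff] at hcond
    obtain ⟨⟨hc1, hc2⟩, hc3, hc4⟩ := hcond
    rw [le_min_iff] at hc3
    obtain ⟨hc3, hc5⟩ := hc3
    have hu1 : u ≤ a + c := by omega
    have hs1 : s ≤ b + c := by omega
    by_cases hpar : (a + c + u) % 2 = 0
    · obtain ⟨x, hx⟩ : ∃ x, a + c = u + 2*x := ⟨(a+c-u)/2, by omega⟩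
      obtain ⟨y, hy⟩ : ∃ y, b + c = s + 2*y := ⟨(b+c-s)/2, by omega⟩
      by_cases hreg : b ≤ c + s ∧ a ≤ c + u
      · obtain ⟨hr1, hr2⟩ := hreg
        have hxd : d ≤ x := by omega
        have hyd : d ≤ y := by omega
        have hxy : x + y = c + d := by omega
        rw [card_core A B a b c u s d x y hA hB hd.symm hx hy hxy hxd hyd]
        have hq2 : (a:ℚ) + b = u + s + 2*d := by exact_mod_cast hd2
        have e1 : ((a:ℚ) - b + u + s)/2 = ((a - d : ℕ) : ℚ) := by
          rw [Nat.cast_sub hda]; field_simp; linarith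
        have e2 : ((c:ℚ) - b + s)/2 = ((x - d : ℕ) : ℚ) := by
          have hx2 : (a:ℚ) + c = u + 2*x := by exact_mod_cast hx
          rw [Nat.cast_sub hxd]; field_simp; linarith
        have e3 : ((b:ℚ) - a + u + s)/2 = ((b - d : ℕ) : ℚ) := by
          rw [Nat.cast_sub hdb]; field_simp; linarith
        have e4 : ((c:ℚ) - a + u)/2 = ((y - d : ℕ) : ℚ) := by
          have hy2 : (b:ℚ) + c = s + 2*y := by exact_mod_cast hy
          rw [Nat.cast_sub hyd]; field_simp; linarith
        rw [e1, e2, e3, e4, gaussQ_natCast, gaussQ_natCast]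
      · -- one of the lower-bound conditions fails: both sides are zero
        have hcard : Nat.card {C : Submodule F (Fin n → F) //
            finrank F C = c ∧
            finrank F (A ⊔ C : Submodule F (Fin n → F))
              - finrank F (A ⊓ C : Submodule F (Fin n → F)) = u ∧
            finrank F (B ⊔ C : Submodule F (Fin n → F))
              - finrank F (B ⊓ C : Submodule F (Fin n → F)) = s} = 0 := by
          rw [Nat.card_eq_zero]
          left
          refine ⟨fun C => ?_⟩
          obtain ⟨hC, hu', hs'⟩ := C.2
          obtain ⟨f1, f2, f3, f4, f5, f6⟩ := factC C.1 hC hu' hs'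
          omega
        rw [hcard]
        by_cases hb : b ≤ c + s
        · have ha : ¬ a ≤ c + u := fun h => hreg ⟨hb, h⟩
          have : gaussQ q (((b:ℚ) - a + u + s)/2) (((c:ℚ) - a + u)/2) = 0 := by
            rw [gaussQ, if_neg]
            rintro ⟨-, hy0, -, -⟩
            have : ((c:ℚ) - a + u) < 0 := by
              have : (c:ℚ) + u < a := by exact_mod_cast (by omega : c + u < a)
              linarith
            linarith
          rw [this, mul_zero]
        · have : gaussQ q (((a:ℚ) - b + u + s)/2) (((c:ℚ) - b + s)/2) = 0 := by
            rw [gaussQ, if_neg]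
            rintro ⟨-, hy0, -, -⟩
            have : ((c:ℚ) - b + s) < 0 := by
              have : (c:ℚ) + s < b := by exact_mod_cast (by omega : c + s < b)
              linarith
            linarith
          rw [this, zero_mul]
    · -- parity fails: both sides are zero
      have hcard : Nat.card {C : Submodule F (Fin n → F) //
          finrank F C = c ∧
          finrank F (A ⊔ C : Submodule F (Fin n → F))
            - finrank F (A ⊓ C : Submodule F (Fin n → F)) = u ∧
          finrank F (B ⊔ C : Submodule F (Fin n → F))
            - finrank F (B ⊓ C : Submodule F (Fin n → F)) = s} = 0 := by
        rw [Nat.card_eq_zero]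
        left
        refine ⟨fun C => ?_⟩
        obtain ⟨hC, hu', hs'⟩ := C.2
        obtain ⟨f1, -⟩ := factC C.1 hC hu' hs'
        omega
      rw [hcard]
      have : gaussQ q (((b:ℚ) - a + u + s)/2) (((c:ℚ) - a + u)/2) = 0 := by
        rw [gaussQ, if_neg]
        rintro ⟨-, -, -, -, hden⟩
        have h2 : ((c:ℚ) - a + u) = (((c : ℤ) - a + u : ℤ) : ℚ) := by push_cast; ring
        rw [h2] at hden
        have := den_half hden
        omega
      rw [this, mul_zero]
  · -- conditions fail: the count is zero
    intro hnot
    by_contra hne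
    obtain ⟨⟨C, hC, hu', hs'⟩, -⟩ := Nat.card_ne_zero.mp hne
    obtain ⟨f1, f2, f3, f4, f5, f6⟩ := factC C hC hu' hs'
    apply hnot
    refine ⟨le_min ?_ ?_, le_min ?_ ?_, le_min ?_ ?_⟩ <;> omega
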